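/- Let r_1, r_2, r_3, r_4 ∈ ℝ² (with r_i = (x_i, y_i)) satisfy det[r_2 − r_1, r_4 − r_1] > 0 and det[r_3 − r_2, r_4 − r_2] > 0, so that T_1 = conv(r_1, r_2, r_4) and T_2 = conv(r_2, r_3, r_4) are two positively oriented nondegenerate triangles sharing the edge r_2 r_4. On each T_i, let β_i := 4 λ^{(i)}_2 λ^{(i)}_4, where λ^{(i)}_2 and λ^{(i)}_4 are the barycentric coordinate functions of T_i associated with the vertices r_2 and r_4. Then for every function w : ℝ² → ℝ: Σ_{i=1}^{2} (|T_i|/3) Σ_{v ∈ vertices(T_i)} ∂_1β_i(v) w(v) = (2/3) (y_1 − y_3) (w(r_2) − w(r_4)), and Σ_{i=1}^{2} (|T_i|/3) Σ_{v ∈ vertices(T_i)} ∂_2β_i(v) w(v) = (2/3) (x_3 − x_1) (w(r_2) − w(r_4)). -/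

import Mathlib

open MeasureTheory


lemma stdtri_eq : convexHull ℝ {((0:ℝ),(0:ℝ)), (1,0), (0,1)} =
    {p : ℝ × ℝ | 0 ≤ p.1 ∧ 0 ≤ p.2 ∧ p.1 + p.2 ≤ 1} := by
  apply Set.Subset.antisymm
  · apply convexHull_min
    · rintro p (rfl | rfl | rfl) <;> norm_num
    · intro x hx y hy a b ha hb hab
      obtain ⟨hx1, hx2, hx3⟩ := hx
      obtain ⟨hy1, hy2, hy3⟩ := hy
      refine ⟨by simp [Prod.smul_fst]; nlinarith, by simp; nlinarith, ?_⟩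
      simp only [Prod.fst_add, Prod.snd_add, Prod.smul_fst, Prod.smul_snd, smul_eq_mul]
      nlinarith
  · rintro ⟨x, y⟩ ⟨hx, hy, hxy⟩
    have hC := convex_convexHull ℝ ({((0:ℝ),(0:ℝ)), (1,0), (0,1)} : Set (ℝ × ℝ))
    have h0 : ((0:ℝ),(0:ℝ)) ∈ convexHull ℝ ({((0:ℝ),(0:ℝ)), (1,0), (0,1)} : Set (ℝ × ℝ)) :=
      subset_convexHull _ _ (by norm_num)
    have h1 : ((1:ℝ),(0:ℝ)) ∈ convexHull ℝ ({((0:ℝ),(0:ℝ)), (1,0), (0,1)} : Set (ℝ × ℝ)) :=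
      subset_convexHull _ _ (by norm_num)
    have h2 : ((0:ℝ),(1:ℝ)) ∈ convexHull ℝ ({((0:ℝ),(0:ℝ)), (1,0), (0,1)} : Set (ℝ × ℝ)) :=
      subset_convexHull _ _ (by norm_num)
    rcases eq_or_lt_of_le (by linarith : (0:ℝ) ≤ x + y) with h | h
    · have hx0 : x = 0 := by linarith
      have hy0 : y = 0 := by linarith
      simpa [hx0, hy0] using h0
    · set t := x + y with ht
      have hu : ((x/t : ℝ), (y/t : ℝ)) ∈ convexHull ℝ ({((0:ℝ),(0:ℝ)), (1,0), (0,1)} : Set (ℝ × ℝ)) := by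
        have := hC h1 h2 (by positivity : (0:ℝ) ≤ x/t) (by positivity : (0:ℝ) ≤ y/t)
          (by field_simp; linarith)
        simpa [Prod.ext_iff] using this
      have := hC h0 hu (by linarith : (0:ℝ) ≤ 1 - t) (le_of_lt h) (by ring)
      have heq : (1 - t) • ((0:ℝ),(0:ℝ)) + t • ((x/t : ℝ), (y/t : ℝ)) = (x, y) := by
        have : t ≠ 0 := ne_of_gt h
        simp [Prod.ext_iff, Prod.smul_fst, Prod.smul_snd]
        constructor <;> field_simp
      rwa [heq] at this

open Pointwise

lemma stdtri_vol : volume {p : ℝ × ℝ | 0 ≤ p.1 ∧ 0 ≤ p.2 ∧ p.1 + p.2 ≤ 1}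
    = ENNReal.ofReal (1/2) := by
  have hmeas : MeasurableSet {p : ℝ × ℝ | 0 ≤ p.1 ∧ 0 ≤ p.2 ∧ p.1 + p.2 ≤ 1} := by
    apply MeasurableSet.inter
    · exact measurableSet_le measurable_const measurable_fst
    apply MeasurableSet.inter
    · exact measurableSet_le measurable_const measurable_snd
    · exact measurableSet_le (measurable_fst.add measurable_snd) measurable_const
  rw [Measure.volume_eq_prod ℝ ℝ, Measure.prod_apply hmeas]
  have hslice : ∀ x : ℝ, volume (Prod.mk x ⁻¹' {p : ℝ × ℝ | 0 ≤ p.1 ∧ 0 ≤ p.2 ∧ p.1 + p.2 ≤ 1})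
      = (Set.Icc (0:ℝ) 1).indicator (fun x => ENNReal.ofReal (1 - x)) x := by
    intro x
    by_cases hx : x ∈ Set.Icc (0:ℝ) 1
    · rw [Set.indicator_of_mem hx]
      have : Prod.mk x ⁻¹' {p : ℝ × ℝ | 0 ≤ p.1 ∧ 0 ≤ p.2 ∧ p.1 + p.2 ≤ 1}
          = Set.Icc (0:ℝ) (1 - x) := by
        ext y
        simp only [Set.mem_preimage, Set.mem_setOf_eq, Set.mem_Icc]
        constructor
        · rintro ⟨_, h2, h3⟩; exact ⟨h2, by linarith⟩
        · rintro ⟨h2, h3⟩; exact ⟨hx.1, h2, by linarith⟩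
      rw [this, Real.volume_Icc]; norm_num
    · rw [Set.indicator_of_notMem hx]
      have : Prod.mk x ⁻¹' {p : ℝ × ℝ | 0 ≤ p.1 ∧ 0 ≤ p.2 ∧ p.1 + p.2 ≤ 1} = ∅ := by
        ext y
        simp only [Set.mem_preimage, Set.mem_setOf_eq, Set.mem_empty_iff_false, iff_false]
        rintro ⟨h1, h2, h3⟩
        rw [Set.mem_Icc, not_and_or] at hx
        rcases hx with hx | hx <;> push_neg at hx <;> linarith
      simp [this]
  simp_rw [hslice]
  rw [lintegral_indicator measurableSet_Icc]
  rw [← ofReal_integral_eq_lintegral_ofReal]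
  · congr 1
    rw [MeasureTheory.integral_Icc_eq_integral_Ioc, ← intervalIntegral.integral_of_le (by norm_num : (0:ℝ) ≤ 1)]
    rw [intervalIntegral.integral_sub intervalIntegrable_const intervalIntegral.intervalIntegrable_id]
    simp [integral_id]
    norm_num
  · exact (continuous_const.sub continuous_id).integrableOn_Icc
  · filter_upwards [ae_restrict_mem measurableSet_Icc] with x hx
    simp only [Pi.zero_apply]
    linarith [hx.2]


lemma tri_area (p q r : ℝ × ℝ)
    (hd : 0 < (q.1 - p.1) * (r.2 - p.2) - (r.1 - p.1) * (q.2 - p.2)) :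
    (volume (convexHull ℝ {p, q, r})).toReal
      = ((q.1 - p.1) * (r.2 - p.2) - (r.1 - p.1) * (q.2 - p.2)) / 2 := by
  set d : ℝ := (q.1 - p.1) * (r.2 - p.2) - (r.1 - p.1) * (q.2 - p.2) with hdef
  set M : Matrix (Fin 2) (Fin 2) ℝ := !![q.1 - p.1, r.1 - p.1; q.2 - p.2, r.2 - p.2] with hM
  set L : (ℝ × ℝ) →ₗ[ℝ] (ℝ × ℝ) := Matrix.toLin (Module.Basis.finTwoProd ℝ) (Module.Basis.finTwoProd ℝ) M with hL
  have hLdet : LinearMap.det L = d := by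
    rw [hL, LinearMap.det_toLin, hM, Matrix.det_fin_two_of]
  have hLapp : ∀ z : ℝ × ℝ, L z = ((q.1 - p.1) * z.1 + (r.1 - p.1) * z.2,
      (q.2 - p.2) * z.1 + (r.2 - p.2) * z.2) := by
    intro z
    rw [hL, hM, show z = (z.1, z.2) from rfl, Matrix.toLin_finTwoProd_apply]
  have himg : ({p, q, r} : Set (ℝ × ℝ)) = p +ᵥ (L '' {((0:ℝ),(0:ℝ)), (1,0), (0,1)}) := by
    rw [Set.image_insert_eq, Set.image_insert_eq, Set.image_singleton]
    rw [Set.vadd_set_insert, Set.vadd_set_insert, Set.vadd_set_singleton]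
    simp only [hLapp]
    have hq : p + ((q.1 - p.1, q.2 - p.2) : ℝ × ℝ) = q := by
      rw [Prod.ext_iff]; constructor <;> simp
    have hr : p + ((r.1 - p.1, r.2 - p.2) : ℝ × ℝ) = r := by
      rw [Prod.ext_iff]; constructor <;> simp
    norm_num [hq, hr, Prod.mk_zero_zero]
  rw [himg, convexHull_vadd, ← L.image_convexHull, measure_vadd,
    Measure.addHaar_image_linearMap, hLdet, stdtri_eq, stdtri_vol,
    abs_of_pos hd]
  rw [← ENNReal.ofReal_mul (le_of_lt hd)]
  rw [ENNReal.toReal_ofReal (by linarith)]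
  ring

lemma affine_hasFDerivAt (a b c : ℝ) (q : ℝ × ℝ) :
    HasFDerivAt (fun p : ℝ × ℝ => a * p.1 + b * p.2 + c)
      (a • ContinuousLinearMap.fst ℝ ℝ ℝ + b • ContinuousLinearMap.snd ℝ ℝ ℝ) q := by
  have h1 : HasFDerivAt (fun p : ℝ × ℝ => a * p.1)
      (a • ContinuousLinearMap.fst ℝ ℝ ℝ) q := (hasFDerivAt_fst (p := q)).const_mul a
  have h2 : HasFDerivAt (fun p : ℝ × ℝ => b * p.2)
      (b • ContinuousLinearMap.snd ℝ ℝ ℝ) q := (hasFDerivAt_snd (p := q)).const_mul b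
  exact (h1.add h2).add_const c

lemma fderiv_bubble (a b c a' b' c' : ℝ) (q v : ℝ × ℝ) :
    fderiv ℝ (fun p : ℝ × ℝ => 4 * (a * p.1 + b * p.2 + c) * (a' * p.1 + b' * p.2 + c')) q v
      = 4 * ((a * v.1 + b * v.2) * (a' * q.1 + b' * q.2 + c')
          + (a * q.1 + b * q.2 + c) * (a' * v.1 + b' * v.2)) := by
  have hg := affine_hasFDerivAt a b c q
  have hh := affine_hasFDerivAt a' b' c' q
  have hf : HasFDerivAt (fun p : ℝ × ℝ => 4 * (a * p.1 + b * p.2 + c) * (a' * p.1 + b' * p.2 + c'))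
      ((4 : ℝ) • ((a * q.1 + b * q.2 + c) • (a' • ContinuousLinearMap.fst ℝ ℝ ℝ + b' • ContinuousLinearMap.snd ℝ ℝ ℝ)
        + (a' * q.1 + b' * q.2 + c') • (a • ContinuousLinearMap.fst ℝ ℝ ℝ + b • ContinuousLinearMap.snd ℝ ℝ ℝ))) q := by
    simp only [mul_assoc]
    exact (hg.mul hh).const_mul (4 : ℝ)
  rw [hf.fderiv]
  simp [ContinuousLinearMap.add_apply, ContinuousLinearMap.smul_apply]
  ring

/-- Two-triangle vertex-quadrature identity for the edge bubble of the shared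
edge `r₂ r₄`: with `T₁ = conv(r₁, r₂, r₄)`, `T₂ = conv(r₂, r₃, r₄)` positively
oriented, and `βᵢ = 4 λ⁽ⁱ⁾₂ λ⁽ⁱ⁾₄` the edge bubble on `Tᵢ`, for every `w`,
`Σᵢ (|Tᵢ|/3) Σ_v ∂₁βᵢ(v) w(v) = (2/3)(y₁ − y₃)(w(r₂) − w(r₄))` and
`Σᵢ (|Tᵢ|/3) Σ_v ∂₂βᵢ(v) w(v) = (2/3)(x₃ − x₁)(w(r₂) − w(r₄))`. -/
theorem edge_bubble_vertex_quadrature_two_triangles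
    (r₁ r₂ r₃ r₄ : ℝ × ℝ)
    (hor₁ : 0 < (r₂.1 - r₁.1) * (r₄.2 - r₁.2) - (r₄.1 - r₁.1) * (r₂.2 - r₁.2))
    (hor₂ : 0 < (r₃.1 - r₂.1) * (r₄.2 - r₂.2) - (r₄.1 - r₂.1) * (r₃.2 - r₂.2))
    (lamA₁ lamB₁ lamA₂ lamB₂ : ℝ × ℝ → ℝ)
    (hlamA₁_aff : ∃ a b c : ℝ, ∀ p : ℝ × ℝ, lamA₁ p = a * p.1 + b * p.2 + c)
    (hlamB₁_aff : ∃ a b c : ℝ, ∀ p : ℝ × ℝ, lamB₁ p = a * p.1 + b * p.2 + c)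
    (hlamA₂_aff : ∃ a b c : ℝ, ∀ p : ℝ × ℝ, lamA₂ p = a * p.1 + b * p.2 + c)
    (hlamB₂_aff : ∃ a b c : ℝ, ∀ p : ℝ × ℝ, lamB₂ p = a * p.1 + b * p.2 + c)
    (hA₁ : lamA₁ r₂ = 1) (hA₁' : lamA₁ r₁ = 0) (hA₁'' : lamA₁ r₄ = 0)
    (hB₁ : lamB₁ r₄ = 1) (hB₁' : lamB₁ r₁ = 0) (hB₁'' : lamB₁ r₂ = 0)
    (hA₂ : lamA₂ r₂ = 1) (hA₂' : lamA₂ r₃ = 0) (hA₂'' : lamA₂ r₄ = 0)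
    (hB₂ : lamB₂ r₄ = 1) (hB₂' : lamB₂ r₃ = 0) (hB₂'' : lamB₂ r₂ = 0)
    (β₁ β₂ : ℝ × ℝ → ℝ)
    (hβ₁ : ∀ p : ℝ × ℝ, β₁ p = 4 * lamA₁ p * lamB₁ p)
    (hβ₂ : ∀ p : ℝ × ℝ, β₂ p = 4 * lamA₂ p * lamB₂ p)
    (w : ℝ × ℝ → ℝ) :
    ((volume (convexHull ℝ {r₁, r₂, r₄})).toReal / 3) *
          (fderiv ℝ β₁ r₁ (1, 0) * w r₁ + fderiv ℝ β₁ r₂ (1, 0) * w r₂ +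
            fderiv ℝ β₁ r₄ (1, 0) * w r₄) +
        ((volume (convexHull ℝ {r₂, r₃, r₄})).toReal / 3) *
          (fderiv ℝ β₂ r₂ (1, 0) * w r₂ + fderiv ℝ β₂ r₃ (1, 0) * w r₃ +
            fderiv ℝ β₂ r₄ (1, 0) * w r₄) =
      (2 / 3) * (r₁.2 - r₃.2) * (w r₂ - w r₄) ∧
    ((volume (convexHull ℝ {r₁, r₂, r₄})).toReal / 3) *
          (fderiv ℝ β₁ r₁ (0, 1) * w r₁ + fderiv ℝ β₁ r₂ (0, 1) * w r₂ +
            fderiv ℝ β₁ r₄ (0, 1) * w r₄) +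
        ((volume (convexHull ℝ {r₂, r₃, r₄})).toReal / 3) *
          (fderiv ℝ β₂ r₂ (0, 1) * w r₂ + fderiv ℝ β₂ r₃ (0, 1) * w r₃ +
            fderiv ℝ β₂ r₄ (0, 1) * w r₄) =
      (2 / 3) * (r₃.1 - r₁.1) * (w r₂ - w r₄) := by
  obtain ⟨aA₁, bA₁, cA₁, hA⟩ := hlamA₁_aff
  obtain ⟨aB₁, bB₁, cB₁, hB⟩ := hlamB₁_aff
  obtain ⟨aA₂, bA₂, cA₂, hC⟩ := hlamA₂_aff
  obtain ⟨aB₂, bB₂, cB₂, hD⟩ := hlamB₂_aff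
  have hβ₁' : β₁ = fun p : ℝ × ℝ =>
      4 * (aA₁ * p.1 + bA₁ * p.2 + cA₁) * (aB₁ * p.1 + bB₁ * p.2 + cB₁) := by
    funext p; rw [hβ₁ p, hA p, hB p]
  have hβ₂' : β₂ = fun p : ℝ × ℝ =>
      4 * (aA₂ * p.1 + bA₂ * p.2 + cA₂) * (aB₂ * p.1 + bB₂ * p.2 + cB₂) := by
    funext p; rw [hβ₂ p, hC p, hD p]
  -- value equations
  have eA2 : aA₁ * r₂.1 + bA₁ * r₂.2 + cA₁ = 1 := by rw [← hA r₂]; exact hA₁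
  have eA1 : aA₁ * r₁.1 + bA₁ * r₁.2 + cA₁ = 0 := by rw [← hA r₁]; exact hA₁'
  have eA4 : aA₁ * r₄.1 + bA₁ * r₄.2 + cA₁ = 0 := by rw [← hA r₄]; exact hA₁''
  have eB4 : aB₁ * r₄.1 + bB₁ * r₄.2 + cB₁ = 1 := by rw [← hB r₄]; exact hB₁
  have eB1 : aB₁ * r₁.1 + bB₁ * r₁.2 + cB₁ = 0 := by rw [← hB r₁]; exact hB₁'
  have eB2 : aB₁ * r₂.1 + bB₁ * r₂.2 + cB₁ = 0 := by rw [← hB r₂]; exact hB₁''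
  have eC2 : aA₂ * r₂.1 + bA₂ * r₂.2 + cA₂ = 1 := by rw [← hC r₂]; exact hA₂
  have eC3 : aA₂ * r₃.1 + bA₂ * r₃.2 + cA₂ = 0 := by rw [← hC r₃]; exact hA₂'
  have eC4 : aA₂ * r₄.1 + bA₂ * r₄.2 + cA₂ = 0 := by rw [← hC r₄]; exact hA₂''
  have eD4 : aB₂ * r₄.1 + bB₂ * r₄.2 + cB₂ = 1 := by rw [← hD r₄]; exact hB₂
  have eD3 : aB₂ * r₃.1 + bB₂ * r₃.2 + cB₂ = 0 := by rw [← hD r₃]; exact hB₂'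
  have eD2 : aB₂ * r₂.1 + bB₂ * r₂.2 + cB₂ = 0 := by rw [← hD r₂]; exact hB₂''
  -- Cramer identities
  set d₁ : ℝ := (r₂.1 - r₁.1) * (r₄.2 - r₁.2) - (r₄.1 - r₁.1) * (r₂.2 - r₁.2) with hd₁
  set d₂ : ℝ := (r₃.1 - r₂.1) * (r₄.2 - r₂.2) - (r₄.1 - r₂.1) * (r₃.2 - r₂.2) with hd₂
  have cA1a : d₁ * aA₁ = r₄.2 - r₁.2 := by
    rw [hd₁]
    linear_combination (r₄.2 - r₁.2) * eA2 + (r₂.2 - r₄.2) * eA1 + (r₁.2 - r₂.2) * eA4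
  have cA1b : d₁ * bA₁ = r₁.1 - r₄.1 := by
    rw [hd₁]
    linear_combination (r₁.1 - r₄.1) * eA2 + (r₄.1 - r₂.1) * eA1 + (r₂.1 - r₁.1) * eA4
  have cB1a : d₁ * aB₁ = r₁.2 - r₂.2 := by
    rw [hd₁]
    linear_combination (r₁.2 - r₂.2) * eB4 + (r₂.2 - r₄.2) * eB1 + (r₄.2 - r₁.2) * eB2
  have cB1b : d₁ * bB₁ = r₂.1 - r₁.1 := by
    rw [hd₁]
    linear_combination (r₂.1 - r₁.1) * eB4 + (r₄.1 - r₂.1) * eB1 + (r₁.1 - r₄.1) * eB2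
  have cA2a : d₂ * aA₂ = r₃.2 - r₄.2 := by
    rw [hd₂]
    linear_combination (r₃.2 - r₄.2) * eC2 + (r₄.2 - r₂.2) * eC3 + (r₂.2 - r₃.2) * eC4
  have cA2b : d₂ * bA₂ = r₄.1 - r₃.1 := by
    rw [hd₂]
    linear_combination (r₄.1 - r₃.1) * eC2 + (r₂.1 - r₄.1) * eC3 + (r₃.1 - r₂.1) * eC4
  have cB2a : d₂ * aB₂ = r₂.2 - r₃.2 := by
    rw [hd₂]
    linear_combination (r₂.2 - r₃.2) * eD4 + (r₄.2 - r₂.2) * eD3 + (r₃.2 - r₄.2) * eD2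
  have cB2b : d₂ * bB₂ = r₃.1 - r₂.1 := by
    rw [hd₂]
    linear_combination (r₃.1 - r₂.1) * eD4 + (r₂.1 - r₄.1) * eD3 + (r₄.1 - r₃.1) * eD2
  have hT₁ : (volume (convexHull ℝ {r₁, r₂, r₄})).toReal = d₁ / 2 := tri_area r₁ r₂ r₄ hor₁
  have hT₂ : (volume (convexHull ℝ {r₂, r₃, r₄})).toReal = d₂ / 2 := tri_area r₂ r₃ r₄ hor₂
  constructor
  · rw [hT₁, hT₂, hβ₁', hβ₂']
    simp only [fderiv_bubble]
    rw [eA2, eA1, eA4, eB4, eB1, eB2, eC2, eC3, eC4, eD4, eD3, eD2]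
    linear_combination (2/3 * w r₂) * cB1a + (2/3 * w r₄) * cA1a
      + (2/3 * w r₂) * cB2a + (2/3 * w r₄) * cA2a
  · rw [hT₁, hT₂, hβ₁', hβ₂']
    simp only [fderiv_bubble]
    rw [eA2, eA1, eA4, eB4, eB1, eB2, eC2, eC3, eC4, eD4, eD3, eD2]
    linear_combination (2/3 * w r₂) * cB1b + (2/3 * w r₄) * cA1b
      + (2/3 * w r₂) * cB2b + (2/3 * w r₄) * cA2b
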